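/- Let G be a finite simple graph with n ≥ 2 vertices and let H = H(G) be the graph obtained from G by one step of the half-model. Then the independence number of H equals C(n, ⌊n/2⌋), the number of new vertices. -/

import Mathlib

open SimpleGraph

/-- The set of "clones": one new vertex for each subset of `V` of size `⌊|V|/2⌋`. -/
abbrev halfClones (V : Type) [Fintype V] [DecidableEq V] : Type :=
  {S : Finset V // S.card = Fintype.card V / 2}

/-- One step of the half-model: old vertices keep their adjacencies; the clone `v_S`
is adjacent exactly to the members of `S`; clones form an independent set. -/
def halfStep {V : Type} [Fintype V] [DecidableEq V] (G : SimpleGraph V) :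
    SimpleGraph (V ⊕ halfClones V) where
  Adj x y :=
    match x, y with
    | Sum.inl u, Sum.inl v => G.Adj u v
    | Sum.inl u, Sum.inr S => u ∈ S.1
    | Sum.inr S, Sum.inl u => u ∈ S.1
    | Sum.inr _, Sum.inr _ => False
  symm := by
    refine ⟨?_⟩
    rintro (u | S) (v | T) h
    · exact G.adj_symm h
    · exact h
    · exact h
    · exact h.elim
  loopless := by
    refine ⟨?_⟩
    rintro (u | S) h
    · exact G.irrefl h
    · exact h.elim

instance halfStep.instDecidableRelAdj {V : Type} [Fintype V] [DecidableEq V]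
    (G : SimpleGraph V) [DecidableRel G.Adj] : DecidableRel (halfStep G).Adj
  | Sum.inl u, Sum.inl v => inferInstanceAs (Decidable (G.Adj u v))
  | Sum.inl u, Sum.inr S => inferInstanceAs (Decidable (u ∈ S.1))
  | Sum.inr S, Sum.inl u => inferInstanceAs (Decidable (u ∈ S.1))
  | Sum.inr _, Sum.inr _ => inferInstanceAs (Decidable False)

/-- The independence number of a graph: the maximum cardinality of a set of pairwise
non-adjacent vertices. -/
noncomputable def indepNum {W : Type} (G : SimpleGraph W) : ℕ :=
  sSup {k | ∃ s : Finset W, s.card = k ∧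
    (↑s : Set W).Pairwise (fun u v => ¬ G.Adj u v)}


lemma arith_aux (n k : ℕ) (hk : 1 ≤ k) :
    ∀ a, a ≤ n - k → a + (n - a).choose k ≤ n.choose k := by
  intro a
  induction a with
  | zero => simp
  | succ a ih =>
    intro ha
    have ha' : a ≤ n - k := Nat.le_of_succ_le ha
    obtain ⟨j, hj⟩ : ∃ j, k = j + 1 := ⟨k - 1, by omega⟩
    obtain ⟨m, hm⟩ : ∃ m, n - a = m + 1 := ⟨n - a - 1, by omega⟩
    have pas : (n - a).choose k = m.choose j + m.choose k := by
      rw [hm, hj, Nat.choose_succ_succ]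
    have hpos : 1 ≤ m.choose j := Nat.choose_pos (by omega)
    have hih := ih ha'
    have hsub : n - (a + 1) = m := by omega
    rw [hsub]
    omega

lemma arith_main (n k a : ℕ) (hk : 1 ≤ k) (ha : a ≤ n)
    (hnk : n ≤ n.choose k) : a + (n - a).choose k ≤ n.choose k := by
  by_cases h : a ≤ n - k
  · exact arith_aux n k hk a h
  · have : n - a < k := by omega
    rw [Nat.choose_eq_zero_of_lt (by omega)]
    omega

/-- if `G` has `n ≥ 2` vertices, then the independence number of
`H = H(G)` equals `C(n, ⌊n/2⌋)`, the number of new vertices. -/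
theorem stmt_11 {V : Type} [Fintype V] [DecidableEq V] (G : SimpleGraph V)
    (hn : 2 ≤ Fintype.card V) :
    _root_.indepNum (halfStep G) = (Fintype.card V).choose (Fintype.card V / 2) := by
  set n := Fintype.card V with hn'
  set k := n / 2 with hk'
  have hk1 : 1 ≤ k := by omega
  have hnnk : n ≤ n.choose k := by
    calc n = n.choose 1 := (Nat.choose_one_right n).symm
    _ ≤ n.choose (n / 2) := Nat.choose_le_middle 1 n
  have hub : ∀ m ∈ {m | ∃ s : Finset (V ⊕ halfClones V), s.card = m ∧
      (↑s : Set (V ⊕ halfClones V)).Pairwise (fun u v => ¬ (halfStep G).Adj u v)},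
      m ≤ n.choose k := by
    rintro m ⟨s, rfl, hp⟩
    set A := s.toLeft with hA
    set B := s.toRight with hB
    have hcard : A.card + B.card = s.card := Finset.card_toLeft_add_card_toRight
    have hBsub : ∀ T ∈ B, (T : halfClones V).1 ∈ Aᶜ.powersetCard k := by
      intro T hT
      rw [Finset.mem_powersetCard]
      refine ⟨?_, T.2⟩
      intro u hu
      rw [Finset.mem_compl]
      intro huA
      have h1 : Sum.inl u ∈ s := Finset.mem_toLeft.mp huA
      have h2 : (Sum.inr T : V ⊕ halfClones V) ∈ s := Finset.mem_toRight.mp hT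
      exact hp h1 h2 (by simp) hu
    have hinj : ∀ T₁ ∈ B, ∀ T₂ ∈ B, (T₁ : halfClones V).1 = (T₂ : halfClones V).1 → T₁ = T₂ := by
      intro T₁ _ T₂ _ h
      exact Subtype.ext h
    have hBcard : B.card ≤ (Aᶜ.powersetCard k).card :=
      Finset.card_le_card_of_injOn _ hBsub hinj
    have hpc : (Aᶜ.powersetCard k).card = (n - A.card).choose k := by
      rw [Finset.card_powersetCard, Finset.card_compl]
    have hAle : A.card ≤ n := by
      rw [hn']; exact Finset.card_le_univ A
    have := arith_main n k A.card hk1 hAle hnnk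
    omega
  have hmem : n.choose k ∈ {m | ∃ s : Finset (V ⊕ halfClones V), s.card = m ∧
      (↑s : Set (V ⊕ halfClones V)).Pairwise (fun u v => ¬ (halfStep G).Adj u v)} := by
    refine ⟨Finset.univ.map ⟨Sum.inr, Sum.inr_injective⟩, ?_, ?_⟩
    · rw [Finset.card_map, Finset.card_univ]
      exact Fintype.card_finset_len k
    · intro x hx y hy hxy
      simp only [Finset.coe_map, Set.mem_image, Finset.mem_coe] at hx hy
      obtain ⟨S, -, rfl⟩ := hx
      obtain ⟨T, -, rfl⟩ := hy
      exact fun h => h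
  exact le_antisymm (csSup_le ⟨_, hmem⟩ hub) (le_csSup ⟨_, hub⟩ hmem)
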